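/- Let f be a symmetric norm on ℝ^n with f(e_1) = 1 (so that ‖·‖_f is a submultiplicative cross norm), and let ‖·‖_f be the induced unitarily invariant norm on B(H). Then two nonzero operators A, B ∈ B(H) satisfy ‖AB‖_f = ‖A‖_f · ‖B‖_f if and only if s_1(AB) = ‖A‖_f · ‖B‖_f. -/

import Mathlib

open scoped InnerProductSpace

variable {H : Type*} [NormedAddCommGroup H] [InnerProductSpace ℂ H] [CompleteSpace H]

/-- The `k`-th singular value (1-indexed) of a bounded operator `A`:
`s_k(A) = inf {‖A - X‖ : rank X < k}`. -/
noncomputable def sval (k : ℕ) (A : H →L[ℂ] H) : ℝ :=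
  sInf { r : ℝ | ∃ X : H →L[ℂ] H,
    Module.rank ℂ (LinearMap.range (X : H →ₗ[ℂ] H)) < (k : Cardinal) ∧ r = ‖A - X‖ }

set_option linter.unusedSectionVars false

lemma svalSet_bddBelow (k : ℕ) (A : H →L[ℂ] H) :
    BddBelow { r : ℝ | ∃ X : H →L[ℂ] H,
      Module.rank ℂ (LinearMap.range (X : H →ₗ[ℂ] H)) < (k : Cardinal) ∧ r = ‖A - X‖ } := by
  refine ⟨0, fun r hr => ?_⟩
  rcases hr with ⟨X, _, rfl⟩
  exact norm_nonneg _

lemma zero_mem_svalSet {k : ℕ} (hk : 0 < k) (A : H →L[ℂ] H) :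
    ‖A‖ ∈ { r : ℝ | ∃ X : H →L[ℂ] H,
      Module.rank ℂ (LinearMap.range (X : H →ₗ[ℂ] H)) < (k : Cardinal) ∧ r = ‖A - X‖ } := by
  refine ⟨0, ?_, by rw [sub_zero]⟩
  have : LinearMap.range ((0 : H →L[ℂ] H) : H →ₗ[ℂ] H) = ⊥ := by
    simp
  rw [this, rank_bot]
  exact_mod_cast hk

lemma sval_nonneg (k : ℕ) (A : H →L[ℂ] H) : 0 ≤ sval k A := by
  apply Real.sInf_nonneg
  rintro r ⟨X, _, rfl⟩
  exact norm_nonneg _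

lemma sval_one (A : H →L[ℂ] H) : sval 1 A = ‖A‖ := by
  have hset : { r : ℝ | ∃ X : H →L[ℂ] H,
      Module.rank ℂ (LinearMap.range (X : H →ₗ[ℂ] H)) < ((1 : ℕ) : Cardinal) ∧ r = ‖A - X‖ }
      = {‖A‖} := by
    ext r
    simp only [Set.mem_setOf_eq, Set.mem_singleton_iff]
    constructor
    · rintro ⟨X, hX, rfl⟩
      have h1 : Module.rank ℂ (LinearMap.range (X : H →ₗ[ℂ] H)) = 0 := by
        rwa [Nat.cast_one, Cardinal.lt_one_iff_zero] at hX
      have h2 : (X : H →ₗ[ℂ] H) = 0 := by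
        rw [← LinearMap.range_eq_bot]
        exact Submodule.rank_eq_zero.mp h1
      have h3 : X = 0 := by
        ext v
        exact congrFun (congrArg DFunLike.coe h2) v
      rw [h3, sub_zero]
    · rintro rfl
      exact zero_mem_svalSet one_pos A
  rw [sval, hset, csInf_singleton]

lemma sval_le_sval {k m : ℕ} (hk : 0 < k) (hkm : k ≤ m) (A : H →L[ℂ] H) :
    sval m A ≤ sval k A := by
  apply csInf_le_csInf (svalSet_bddBelow m A) ⟨‖A‖, zero_mem_svalSet hk A⟩
  rintro r ⟨X, hX, rfl⟩
  exact ⟨X, lt_of_lt_of_le hX (by exact_mod_cast hkm), rfl⟩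

lemma sval_comp_le_left {k : ℕ} (hk : 0 < k) (A B : H →L[ℂ] H) :
    sval k (A ∘L B) ≤ ‖A‖ * sval k B := by
  have key : ∀ r ∈ { r : ℝ | ∃ X : H →L[ℂ] H,
      Module.rank ℂ (LinearMap.range (X : H →ₗ[ℂ] H)) < (k : Cardinal) ∧ r = ‖B - X‖ },
      sval k (A ∘L B) ≤ ‖A‖ * r := by
    rintro r ⟨X, hX, rfl⟩
    have hmem : ‖A ∘L B - A ∘L X‖ ∈ { r : ℝ | ∃ Y : H →L[ℂ] H,
        Module.rank ℂ (LinearMap.range (Y : H →ₗ[ℂ] H)) < (k : Cardinal) ∧ r = ‖A ∘L B - Y‖ } :=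
      ⟨A ∘L X, lt_of_le_of_lt (by
        rw [ContinuousLinearMap.toLinearMap_comp]
        exact LinearMap.rank_comp_le_right _ _) hX, rfl⟩
    calc sval k (A ∘L B) ≤ ‖A ∘L B - A ∘L X‖ := csInf_le (svalSet_bddBelow _ _) hmem
      _ = ‖A ∘L (B - X)‖ := by rw [ContinuousLinearMap.comp_sub]
      _ ≤ ‖A‖ * ‖B - X‖ := ContinuousLinearMap.opNorm_comp_le _ _
  by_cases hA : ‖A‖ = 0
  · have : A = 0 := by rwa [norm_eq_zero] at hA
    subst this
    have h0 : (0 : H →L[ℂ] H) ∘L B = 0 := by ext v; simp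
    rw [h0, hA, zero_mul]
    have h1 : sval k (0 : H →L[ℂ] H) ≤ sval 1 (0 : H →L[ℂ] H) := by
      rcases Nat.eq_or_lt_of_le hk with h | h
      · rw [← h]
      · exact sval_le_sval one_pos h.le (0 : H →L[ℂ] H)
    rw [sval_one] at h1
    simp only [norm_zero] at h1
    exact h1
  · have hApos : 0 < ‖A‖ := lt_of_le_of_ne (norm_nonneg _) (Ne.symm hA)
    by_contra hcon
    push_neg at hcon
    have h2 : sval k B < sval k (A ∘L B) / ‖A‖ := by
      rw [lt_div_iff₀ hApos]
      calc sval k B * ‖A‖ = ‖A‖ * sval k B := mul_comm _ _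
        _ < sval k (A ∘L B) := hcon
    obtain ⟨r, hr, hrlt⟩ := exists_lt_of_csInf_lt ⟨‖B‖, zero_mem_svalSet hk B⟩ h2
    have h3 := key r hr
    rw [lt_div_iff₀ hApos] at hrlt
    linarith

lemma sval_comp_le_right {k : ℕ} (hk : 0 < k) (A B : H →L[ℂ] H) :
    sval k (A ∘L B) ≤ sval k A * ‖B‖ := by
  have key : ∀ r ∈ { r : ℝ | ∃ X : H →L[ℂ] H,
      Module.rank ℂ (LinearMap.range (X : H →ₗ[ℂ] H)) < (k : Cardinal) ∧ r = ‖A - X‖ },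
      sval k (A ∘L B) ≤ r * ‖B‖ := by
    rintro r ⟨X, hX, rfl⟩
    have hmem : ‖A ∘L B - X ∘L B‖ ∈ { r : ℝ | ∃ Y : H →L[ℂ] H,
        Module.rank ℂ (LinearMap.range (Y : H →ₗ[ℂ] H)) < (k : Cardinal) ∧ r = ‖A ∘L B - Y‖ } :=
      ⟨X ∘L B, lt_of_le_of_lt (by
        rw [ContinuousLinearMap.toLinearMap_comp]
        exact LinearMap.rank_comp_le_left _ _) hX, rfl⟩
    calc sval k (A ∘L B) ≤ ‖A ∘L B - X ∘L B‖ := csInf_le (svalSet_bddBelow _ _) hmem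
      _ = ‖(A - X) ∘L B‖ := by rw [ContinuousLinearMap.sub_comp]
      _ ≤ ‖A - X‖ * ‖B‖ := ContinuousLinearMap.opNorm_comp_le _ _
  by_cases hB : ‖B‖ = 0
  · have : B = 0 := by rwa [norm_eq_zero] at hB
    subst this
    have h0 : A ∘L (0 : H →L[ℂ] H) = 0 := by ext v; simp
    rw [h0, hB, mul_zero]
    have h1 : sval k (0 : H →L[ℂ] H) ≤ sval 1 (0 : H →L[ℂ] H) := by
      rcases Nat.eq_or_lt_of_le hk with h | h
      · rw [← h]
      · exact sval_le_sval one_pos h.le (0 : H →L[ℂ] H)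
    rw [sval_one] at h1
    simp only [norm_zero] at h1
    exact h1
  · have hBpos : 0 < ‖B‖ := lt_of_le_of_ne (norm_nonneg _) (Ne.symm hB)
    by_contra hcon
    push_neg at hcon
    have h2 : sval k A < sval k (A ∘L B) / ‖B‖ := by
      rw [lt_div_iff₀ hBpos]
      exact hcon
    obtain ⟨r, hr, hrlt⟩ := exists_lt_of_csInf_lt ⟨‖A‖, zero_mem_svalSet hk A⟩ h2
    have h3 := key r hr
    rw [lt_div_iff₀ hBpos] at hrlt
    linarith


/-- `f : ℝ^n → ℝ` is a symmetric norm: a norm invariant under permutations of the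
coordinates and under sign changes of the coordinates. -/
structure IsSymmetricNorm (n : ℕ) (f : (Fin n → ℝ) → ℝ) : Prop where
  triangle : ∀ x y, f (x + y) ≤ f x + f y
  homog : ∀ (t : ℝ) (x), f (t • x) = |t| * f x
  definite : ∀ x, x ≠ 0 → 0 < f x
  perm_invariant : ∀ (σ : Equiv.Perm (Fin n)) (x), f (fun i => x (σ i)) = f x
  sign_invariant : ∀ (ε : Fin n → ℝ), (∀ i, ε i = 1 ∨ ε i = -1) →
    ∀ x, f (fun i => ε i * x i) = f x

namespace IsSymmetricNorm

variable {n : ℕ} {f : (Fin n → ℝ) → ℝ} (hf : IsSymmetricNorm n f)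

include hf

lemma zero : f 0 = 0 := by
  have := hf.homog 0 0
  simpa using this

lemma neg (x : Fin n → ℝ) : f (-x) = f x := by
  have := hf.homog (-1) x
  simpa using this

lemma nonneg (x : Fin n → ℝ) : 0 ≤ f x := by
  have h1 : f (x + (-x)) ≤ f x + f (-x) := hf.triangle x (-x)
  rw [add_neg_cancel, hf.zero, hf.neg] at h1
  linarith

lemma single_eq (hn : 0 < n) (hcross : f (Pi.single (⟨0, hn⟩ : Fin n) 1 : Fin n → ℝ) = 1)
    (i : Fin n) : f (Pi.single i 1 : Fin n → ℝ) = 1 := by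
  set i0 : Fin n := ⟨0, hn⟩
  have key : (fun j => (Pi.single i0 (1:ℝ) : Fin n → ℝ) (Equiv.swap i0 i j))
      = (Pi.single i (1:ℝ) : Fin n → ℝ) := by
    funext j
    rcases eq_or_ne j i with rfl | hj
    · rw [Equiv.swap_apply_right]
      simp [Pi.single_apply]
    · rcases eq_or_ne j i0 with rfl | hj0
      · rw [Equiv.swap_apply_left]
        rw [Pi.single_apply, Pi.single_apply]
        rw [if_neg (fun h => hj h.symm), if_neg (fun h => hj h)]
      · rw [Equiv.swap_apply_of_ne_of_ne hj0 hj]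
        rw [Pi.single_apply, Pi.single_apply, if_neg hj0, if_neg hj]
  have := hf.perm_invariant (Equiv.swap i0 i) (Pi.single i0 (1:ℝ))
  rw [key] at this
  rw [this]
  exact hcross

lemma coord_le (hn : 0 < n) (hcross : f (Pi.single (⟨0, hn⟩ : Fin n) 1 : Fin n → ℝ) = 1)
    (x : Fin n → ℝ) (i : Fin n) : |x i| ≤ f x := by
  classical
  set ε : Fin n → ℝ := fun j => if j = i then 1 else -1 with hε
  have hεval : ∀ j, ε j = 1 ∨ ε j = -1 := by
    intro j; by_cases h : j = i <;> simp [hε, h]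
  have hsign := hf.sign_invariant ε hεval x
  have hsum : x + (fun j => ε j * x j) = (2 * x i) • (Pi.single i (1:ℝ) : Fin n → ℝ) := by
    funext j
    rcases eq_or_ne j i with rfl | hj
    · simp [hε]; ring
    · simp [hε, hj, Pi.single_apply]
  have h1 : f ((2 * x i) • (Pi.single i (1:ℝ) : Fin n → ℝ)) ≤ f x + f (fun j => ε j * x j) := by
    rw [← hsum]; exact hf.triangle _ _
  rw [hsign, hf.homog, hf.single_eq hn hcross i, mul_one, abs_mul] at h1
  have : |(2:ℝ)| = 2 := by norm_num
  rw [this] at h1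
  linarith

lemma update_le (y : Fin n → ℝ) (i : Fin n) (t : ℝ) (ht : |t| ≤ |y i|) :
    f (Function.update y i t) ≤ f y := by
  classical
  by_cases hyi : y i = 0
  · have ht0 : t = 0 := by
      rw [hyi, abs_zero] at ht
      exact abs_eq_zero.mp (le_antisymm ht (abs_nonneg t))
    rw [ht0, ← hyi, Function.update_eq_self]
  · set lam := t / y i with hlam
    have hlam_abs : |lam| ≤ 1 := by
      rw [hlam, abs_div]
      rw [div_le_one (abs_pos.mpr hyi)]
      exact ht
    set a := (1 + lam) / 2 with ha
    set b := (1 - lam) / 2 with hb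
    have ha0 : 0 ≤ a := by
      have := neg_le_of_abs_le hlam_abs
      rw [ha]; linarith
    have hb0 : 0 ≤ b := by
      have := le_of_abs_le hlam_abs
      rw [hb]; linarith
    set y' : Fin n → ℝ := fun j => (if j = i then (-1:ℝ) else 1) * y j with hy'
    have hfy' : f y' = f y := by
      apply hf.sign_invariant
      intro j; by_cases h : j = i <;> simp [h]
    have hdecomp : Function.update y i t = a • y + b • y' := by
      funext j
      rcases eq_or_ne j i with rfl | hj
      · simp only [Function.update_self, Pi.add_apply, Pi.smul_apply, smul_eq_mul, hy',
          if_pos rfl, if_true]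
        rw [ha, hb, hlam]
        field_simp
        ring
      · simp only [Function.update_of_ne hj, Pi.add_apply, Pi.smul_apply, smul_eq_mul, hy',
          if_neg hj]
        rw [ha, hb]
        ring
    rw [hdecomp]
    calc f (a • y + b • y') ≤ f (a • y) + f (b • y') := hf.triangle _ _
      _ = |a| * f y + |b| * f y' := by rw [hf.homog, hf.homog]
      _ = a * f y + b * f y := by rw [abs_of_nonneg ha0, abs_of_nonneg hb0, hfy']
      _ = f y := by rw [ha, hb]; ring

lemma mono {x y : Fin n → ℝ} (hx : ∀ i, 0 ≤ x i) (hxy : ∀ i, x i ≤ y i) :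
    f x ≤ f y := by
  classical
  have key : ∀ S : Finset (Fin n), f (S.piecewise x y) ≤ f y := by
    intro S
    induction S using Finset.induction_on with
    | empty => rw [Finset.piecewise_empty]
    | @insert i S' hi ih =>
      rw [Finset.piecewise_insert]
      have h1 : |x i| ≤ |(S'.piecewise x y) i| := by
        rw [Finset.piecewise_eq_of_notMem _ _ _ hi]
        rw [abs_of_nonneg (hx i), abs_of_nonneg (le_trans (hx i) (hxy i))]
        exact hxy i
      exact le_trans (hf.update_le _ i (x i) h1) ih
  have := key Finset.univ
  rwa [Finset.piecewise_univ] at this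

lemma dual (x : Fin n → ℝ) (hx : x ≠ 0) :
    ∃ φ : (Fin n → ℝ) →ₗ[ℝ] ℝ, φ x = f x ∧ ∀ u, φ u ≤ f u := by
  set pmap : (Fin n → ℝ) →ₗ.[ℝ] ℝ := LinearPMap.mkSpanSingleton x (f x) hx with hpmap
  have hdom : ∀ z : pmap.domain, pmap z ≤ f z := by
    intro z
    have hz : (z : Fin n → ℝ) ∈ Submodule.span ℝ {x} := z.2
    rcases Submodule.mem_span_singleton.mp hz with ⟨c, hc⟩
    have hzz : z = ⟨c • x, by rw [hc]; exact z.2⟩ := Subtype.ext hc.symm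
    rw [hzz, LinearPMap.mkSpanSingleton'_apply]
    rw [hf.homog]
    calc c • f x = c * f x := rfl
      _ ≤ |c| * f x := mul_le_mul_of_nonneg_right (le_abs_self c) (hf.nonneg x)
  obtain ⟨g, hg1, hg2⟩ := exists_extension_of_le_sublinear pmap f
    (fun c hc u => by rw [hf.homog, abs_of_pos hc])
    (fun u v => hf.triangle u v) hdom
  refine ⟨g, ?_, hg2⟩
  have hmem : x ∈ pmap.domain := Submodule.mem_span_singleton_self x
  have := hg1 ⟨x, hmem⟩
  rw [this]
  exact LinearPMap.mkSpanSingleton_apply ℝ ℝ hx (f x)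

end IsSymmetricNorm

/-- The unitarily invariant norm induced by a symmetric norm `f` on `ℝ^n`:
`‖A‖_f = f (s_1(A), …, s_n(A))`. -/
noncomputable def normf (n : ℕ) (f : (Fin n → ℝ) → ℝ) (A : H →L[ℂ] H) : ℝ :=
  f (fun j : Fin n => sval (j.1 + 1) A)

theorem stmt9 (n : ℕ) (hn : 0 < n) (hdim : (n : Cardinal) ≤ Module.rank ℂ H)
    (f : (Fin n → ℝ) → ℝ) (hf : IsSymmetricNorm n f)
    (hcross : f (Pi.single (⟨0, hn⟩ : Fin n) 1 : Fin n → ℝ) = 1) :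
    ∀ A B : H →L[ℂ] H, A ≠ 0 → B ≠ 0 →
      (normf n f (A ∘L B) = normf n f A * normf n f B ↔
        sval 1 (A ∘L B) = normf n f A * normf n f B) := by
  classical
  intro A B hA hB
  simp only [normf]
  set sA : Fin n → ℝ := fun j => sval (j.1 + 1) A with hsAdef
  set sB : Fin n → ℝ := fun j => sval (j.1 + 1) B with hsBdef
  set x : Fin n → ℝ := fun j => sval (j.1 + 1) (A ∘L B) with hxdef
  set j0 : Fin n := ⟨0, hn⟩ with hj0def
  have hj0le : ∀ j : Fin n, j0 ≤ j := by
    intro j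
    simp only [Fin.le_def, hj0def]
    exact Nat.zero_le _
  have hsAj0 : sA j0 = ‖A‖ := by
    show sval (0 + 1) A = ‖A‖
    rw [Nat.zero_add, sval_one]
  have hsBj0 : sB j0 = ‖B‖ := by
    show sval (0 + 1) B = ‖B‖
    rw [Nat.zero_add, sval_one]
  have hxj0 : x j0 = sval 1 (A ∘L B) := by
    show sval (0 + 1) (A ∘L B) = sval 1 (A ∘L B)
    rw [Nat.zero_add]
  have hAle : ‖A‖ ≤ f sA := by
    rw [← hsAj0]
    exact le_trans (le_abs_self _) (hf.coord_le hn hcross sA j0)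
  have hBle : ‖B‖ ≤ f sB := by
    rw [← hsBj0]
    exact le_trans (le_abs_self _) (hf.coord_le hn hcross sB j0)
  have hfApos : 0 < f sA := by
    apply hf.definite
    intro h0
    apply hA
    rw [← norm_eq_zero, ← hsAj0, h0, Pi.zero_apply]
  have hfBpos : 0 < f sB := by
    apply hf.definite
    intro h0
    apply hB
    rw [← norm_eq_zero, ← hsBj0, h0, Pi.zero_apply]
  have hx0 : ∀ j, 0 ≤ x j := fun j => sval_nonneg _ _
  have hxanti : ∀ i j : Fin n, i ≤ j → x j ≤ x i := by
    intro i j hij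
    exact sval_le_sval (Nat.succ_pos _) (Nat.add_le_add_right (Fin.le_def.mp hij) 1) _
  have hxyL : ∀ j, x j ≤ ‖A‖ * sB j := fun j => sval_comp_le_left (Nat.succ_pos _) A B
  have hxyR : ∀ j, x j ≤ sA j * ‖B‖ := fun j => sval_comp_le_right (Nat.succ_pos _) A B
  set yL : Fin n → ℝ := fun j => ‖A‖ * sB j with hyLdef
  have hfyL : f yL = ‖A‖ * f sB := by
    have : yL = ‖A‖ • sB := by funext j; simp [hyLdef]
    rw [this, hf.homog, abs_of_nonneg (norm_nonneg A)]
  have hfyR : f (fun j => sA j * ‖B‖) = ‖B‖ * f sA := by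
    have : (fun j => sA j * ‖B‖) = ‖B‖ • sA := by
      funext j; simp [mul_comm]
    rw [this, hf.homog, abs_of_nonneg (norm_nonneg B)]
  have ub1 : f x ≤ ‖A‖ * f sB := by
    rw [← hfyL]
    exact hf.mono hx0 hxyL
  have ub2 : f x ≤ ‖B‖ * f sA := by
    rw [← hfyR]
    exact hf.mono hx0 hxyR
  have ubc1 : ‖A‖ * f sB ≤ f sA * f sB :=
    mul_le_mul_of_nonneg_right hAle (hf.nonneg _)
  have ubc2 : ‖B‖ * f sA ≤ f sB * f sA :=
    mul_le_mul_of_nonneg_right hBle (hf.nonneg _)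
  constructor
  · intro h
    have hAeq : ‖A‖ = f sA := by
      have h1 : f sA * f sB ≤ ‖A‖ * f sB := by
        rw [← h]; exact ub1
      have h2 : ‖A‖ * f sB = f sA * f sB := le_antisymm ubc1 h1
      exact (mul_right_cancel₀ (ne_of_gt hfBpos) h2)
    have hBeq : ‖B‖ = f sB := by
      have h1 : f sB * f sA ≤ ‖B‖ * f sA := by
        rw [mul_comm (f sB) (f sA), ← h]; exact ub2
      have h2 : ‖B‖ * f sA = f sB * f sA := le_antisymm ubc2 h1
      exact (mul_right_cancel₀ (ne_of_gt hfApos) h2)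
    rw [← hxj0]
    set c : ℝ := f sA * f sB with hcdef
    have hcpos : 0 < c := mul_pos hfApos hfBpos
    apply le_antisymm
    · calc x j0 = sval 1 (A ∘L B) := hxj0
        _ = ‖A ∘L B‖ := sval_one _
        _ ≤ ‖A‖ * ‖B‖ := ContinuousLinearMap.opNorm_comp_le _ _
        _ = c := by rw [hAeq, hBeq]
    · by_contra hlt
      push_neg at hlt
      have hxne : x ≠ 0 := by
        intro h0
        rw [h0, hf.zero] at h
        exact absurd h.symm (ne_of_gt hcpos)
      obtain ⟨φ, hφx, hφle⟩ := hf.dual x hxne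
      set d : Fin n → ℝ := fun j => φ (fun k => if j = k then (1:ℝ) else 0) with hddef
      have hφsum : ∀ u : Fin n → ℝ, φ u = ∑ j, u j * d j := by
        intro u
        conv_lhs => rw [pi_eq_sum_univ u]
        rw [map_sum]
        congr 1
        funext j
        rw [map_smul, smul_eq_mul]
      set ε : Fin n → ℝ := fun j => if d j < 0 then -1 else 1 with hεdef
      have hεval : ∀ j, ε j = 1 ∨ ε j = -1 := by
        intro j; by_cases hj : d j < 0 <;> simp [hεdef, hj]
      have hεd : ∀ j, ε j * d j = |d j| := by
        intro j
        by_cases hj : d j < 0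
        · simp [hεdef, hj, abs_of_neg hj]
        · simp [hεdef, hj, abs_of_nonneg (not_lt.mp hj)]
      set d2 : Fin n → ℝ := fun j => |d j| with hd2def
      set σ : Equiv.Perm (Fin n) := Tuple.sort (fun j => -d2 j) with hσdef
      set d' : Fin n → ℝ := fun j => d2 (σ j) with hd'def
      have hd'anti : Antitone d' := by
        intro i j hij
        have hmono := Tuple.monotone_sort (fun j => -d2 j) hij
        simp only [Function.comp_apply] at hmono
        simp only [hd'def]
        linarith
      have hd'0 : ∀ j, 0 ≤ d' j := fun j => abs_nonneg _
      have hdual' : ∀ u : Fin n → ℝ, (∑ j, u j * d' j) ≤ f u := by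
        intro u
        have e1 : (∑ j, u j * d' j) = ∑ j, u (σ.symm j) * d2 j := by
          rw [← Equiv.sum_comp σ (fun j => u (σ.symm j) * d2 j)]
          apply Finset.sum_congr rfl
          intro j _
          rw [Equiv.symm_apply_apply]
        have e2 : (∑ j, u (σ.symm j) * d2 j) = φ (fun j => ε j * u (σ.symm j)) := by
          rw [hφsum]
          apply Finset.sum_congr rfl
          intro j _
          rw [mul_comm (ε j) _, mul_assoc, hεd j]
        calc (∑ j, u j * d' j) = φ (fun j => ε j * u (σ.symm j)) := by rw [e1, e2]
          _ ≤ f (fun j => ε j * u (σ.symm j)) := hφle _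
          _ = f (fun j => u (σ.symm j)) := hf.sign_invariant ε hεval _
          _ = f u := hf.perm_invariant σ.symm u
      have hMono : Monovary x d' := by
        intro i j hij
        rcases le_total j i with hji | hji
        · exact hxanti j i hji
        · exact absurd hij (not_lt.mpr (hd'anti hji))
      have hsum_x : (∑ j, x j * d' j) = f x := by
        apply le_antisymm (hdual' x)
        have s1 : f x = ∑ j, x j * d j := by rw [← hφx, hφsum]
        have s2 : (∑ j, x j * d j) ≤ ∑ j, x j * d2 j :=
          Finset.sum_le_sum fun j _ =>
            mul_le_mul_of_nonneg_left (le_abs_self _) (hx0 j)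
        have s3 : (∑ j, x j * d2 j) = ∑ j, x j * d' (σ.symm j) := by
          apply Finset.sum_congr rfl
          intro j _
          simp only [hd'def, Equiv.apply_symm_apply]
        have s4 : (∑ j, x j * d' (σ.symm j)) ≤ ∑ j, x j * d' j := by
          have := hMono.sum_smul_comp_perm_le_sum_smul (σ := σ.symm)
          simpa only [smul_eq_mul] using this
        rw [s1]
        calc (∑ j, x j * d j) ≤ ∑ j, x j * d2 j := s2
          _ = ∑ j, x j * d' (σ.symm j) := s3
          _ ≤ ∑ j, x j * d' j := s4
      set z : Fin n → ℝ := fun j => min (x j0) (yL j) with hzdef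
      have hxz : ∀ j, x j ≤ z j := fun j => le_min (hxanti j0 j (hj0le j)) (hxyL j)
      have hchain1 : (∑ j, x j * d' j) ≤ ∑ j, z j * d' j :=
        Finset.sum_le_sum fun j _ => mul_le_mul_of_nonneg_right (hxz j) (hd'0 j)
      have hchain2 : (∑ j, z j * d' j) ≤ ∑ j, yL j * d' j :=
        Finset.sum_le_sum fun j _ => mul_le_mul_of_nonneg_right (min_le_right _ _) (hd'0 j)
      have hfyLc : f yL = c := by rw [hfyL, hAeq]
      have hchain3 : (∑ j, yL j * d' j) ≤ c := by
        rw [← hfyLc]; exact hdual' yL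
      have hfxc : f x = c := h
      have hq : (∑ j, z j * d' j) = ∑ j, yL j * d' j := by
        apply le_antisymm hchain2
        calc (∑ j, yL j * d' j) ≤ c := hchain3
          _ = f x := hfxc.symm
          _ = ∑ j, x j * d' j := hsum_x.symm
          _ ≤ ∑ j, z j * d' j := hchain1
      have hterm : ∀ j ∈ Finset.univ, (yL j - z j) * d' j = 0 := by
        rw [← Finset.sum_eq_zero_iff_of_nonneg]
        · have : (∑ j, (yL j - z j) * d' j) = (∑ j, yL j * d' j) - ∑ j, z j * d' j := by
            rw [← Finset.sum_sub_distrib]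
            apply Finset.sum_congr rfl
            intro j _
            ring
          rw [this, hq, sub_self]
        · intro j _
          apply mul_nonneg _ (hd'0 j)
          have : z j ≤ yL j := min_le_right _ _
          linarith
      have hyLj0 : yL j0 = c := by
        simp only [hyLdef]
        rw [hsBj0, hAeq, hBeq]
      have hzj0 : z j0 = x j0 := by
        simp only [hzdef]
        rw [min_eq_left]
        rw [hyLj0]
        exact le_of_lt hlt
      have hd'j0 : d' j0 = 0 := by
        have := hterm j0 (Finset.mem_univ _)
        rcases mul_eq_zero.mp this with h1 | h1
        · exfalso
          rw [hzj0, hyLj0] at h1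
          have : x j0 = c := by linarith
          exact absurd this (ne_of_lt hlt)
        · exact h1
      have hd'zero : ∀ j, d' j = 0 := by
        intro j
        exact le_antisymm (hd'j0 ▸ hd'anti (hj0le j)) (hd'0 j)
      have : f x = 0 := by
        rw [← hsum_x]
        apply Finset.sum_eq_zero
        intro j _
        rw [hd'zero j, mul_zero]
      rw [hfxc] at this
      exact absurd this (ne_of_gt hcpos)
  · intro h
    apply le_antisymm (le_trans ub1 ubc1)
    calc f sA * f sB = sval 1 (A ∘L B) := h.symm
      _ = x j0 := hxj0.symm
      _ ≤ |x j0| := le_abs_self _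
      _ ≤ f x := hf.coord_le hn hcross x j0
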